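/- Let c = (c_1, …, c_m) ∈ ℤ^m satisfy Σ_{i=1}^m c_i v_i = 0, and write c_i = a_i − b_i where a_i, b_i ≥ 0 and a_i b_i = 0; let I = {i : a_i > 0} and J = {j : b_j > 0}. Then the real number ρ = Σ_{i∈I} a_i ℓ_i(u) − Σ_{j∈J} b_j ℓ_j(u) is independent of u ∈ ℝ^n, and the element r = Π_{i∈I} z_i^{a_i} − T^{ρ} Π_{j∈J} z_j^{b_j} belongs to the quantum Stanley–Reisner ideal SR_ω(X). -/

import Mathlib

noncomputable section

open scoped Classical Pointwise

/-- Auxiliary: the sum of two subsets of `ℝ` each of which meets every interval `(-∞, C]`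
in a finite set again has this property. -/
theorem add_inter_Iic_finite {A B : Set ℝ}
    (hA : ∀ C : ℝ, (A ∩ Set.Iic C).Finite) (hB : ∀ C : ℝ, (B ∩ Set.Iic C).Finite) :
    ∀ C : ℝ, ((A + B) ∩ Set.Iic C).Finite := by
  intro C
  rcases Set.eq_empty_or_nonempty A with hAe | ⟨a₀, ha₀⟩
  · simp [hAe]
  rcases Set.eq_empty_or_nonempty B with hBe | ⟨b₀, hb₀⟩
  · simp [hBe]
  obtain ⟨a₁, ha₁A, ha₁⟩ : ∃ a₁ ∈ A, ∀ a ∈ A, a₁ ≤ a := by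
    obtain ⟨a₁, h₁, h₂⟩ := Set.exists_min_image _ id (hA a₀) ⟨a₀, ha₀, Set.self_mem_Iic⟩
    refine ⟨a₁, h₁.1, fun a ha => ?_⟩
    by_cases hle : a ≤ a₀
    · exact h₂ a ⟨ha, hle⟩
    · exact le_trans (h₂ a₀ ⟨ha₀, Set.self_mem_Iic⟩) (le_of_not_ge hle)
  obtain ⟨b₁, hb₁B, hb₁⟩ : ∃ b₁ ∈ B, ∀ b ∈ B, b₁ ≤ b := by
    obtain ⟨b₁, h₁, h₂⟩ := Set.exists_min_image _ id (hB b₀) ⟨b₀, hb₀, Set.self_mem_Iic⟩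
    refine ⟨b₁, h₁.1, fun b hb => ?_⟩
    by_cases hle : b ≤ b₀
    · exact h₂ b ⟨hb, hle⟩
    · exact le_trans (h₂ b₀ ⟨hb₀, Set.self_mem_Iic⟩) (le_of_not_ge hle)
  have hsub : (A + B) ∩ Set.Iic C ⊆
      (fun p : ℝ × ℝ => p.1 + p.2) '' ((A ∩ Set.Iic (C - b₁)) ×ˢ (B ∩ Set.Iic (C - a₁))) := by
    rintro r ⟨hr, hrC⟩
    rw [Set.mem_add] at hr
    obtain ⟨a, ha, b, hb, rfl⟩ := hr
    have hC : a + b ≤ C := hrC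
    exact ⟨(a, b), ⟨⟨ha, by have := hb₁ b hb; simp only [Set.mem_Iic]; linarith⟩,
      ⟨hb, by have := ha₁ a ha; simp only [Set.mem_Iic]; linarith⟩⟩, rfl⟩
  exact Set.Finite.subset (Set.Finite.image _ (Set.Finite.prod (hA _) (hB _))) hsub

variable (F : Type*) [Field F]

/-- The universal Novikov field `Λ^F`: the subring of Hahn series over `ℝ` with coefficients
in `F` whose support meets every interval `(-∞, C]` in a finite set.  (Formal sums
`Σ aᵢ T^{λᵢ}` with `λᵢ → ∞`.) -/
def Novikov : Subring (HahnSeries ℝ F) where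
  carrier := {s | ∀ C : ℝ, (s.support ∩ Set.Iic C).Finite}
  zero_mem' := by intro C; simp [HahnSeries.support_zero]
  one_mem' := by
    intro C
    refine Set.Finite.subset (Set.finite_singleton (0 : ℝ)) ?_
    intro r hr
    have h1 : (1 : HahnSeries ℝ F).coeff r ≠ 0 := hr.1
    rw [HahnSeries.coeff_one] at h1
    by_contra hne
    simp only [Set.mem_singleton_iff] at hne
    simp [hne] at h1
  add_mem' := by
    intro a b ha hb C
    refine Set.Finite.subset ((ha C).union (hb C)) ?_
    intro r hr
    rcases HahnSeries.support_add_subset _ _ hr.1 with h | h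
    · exact Or.inl ⟨h, hr.2⟩
    · exact Or.inr ⟨h, hr.2⟩
  neg_mem' := by
    intro a ha C
    refine Set.Finite.subset (ha C) ?_
    intro r hr
    rw [HahnSeries.support_neg] at hr
    exact hr
  mul_mem' := by
    intro a b ha hb C
    refine Set.Finite.subset (add_inter_Iic_finite ha hb C) ?_
    intro r hr
    exact ⟨HahnSeries.support_mul_subset hr.1, hr.2⟩

/-- The element `T^c` of the universal Novikov field. -/
def NovikovT (c : ℝ) : Novikov F :=
  ⟨HahnSeries.single c 1, by
    intro C
    refine Set.Finite.subset (Set.finite_singleton c) ?_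
    intro r hr
    exact HahnSeries.support_single_subset hr.1⟩

/-- The constant element `c·T^0` of the universal Novikov field. -/
def NovikovC (c : F) : Novikov F :=
  ⟨HahnSeries.single (0 : ℝ) c, by
    intro C
    refine Set.Finite.subset (Set.finite_singleton (0 : ℝ)) ?_
    intro r hr
    exact HahnSeries.support_single_subset hr.1⟩

variable {F}

/-- Membership in `Λ₀^F ⊆ Λ^F`: all exponents are `≥ 0`. -/
def MemLambda0 (x : Novikov F) : Prop :=
  ∀ r : ℝ, r < 0 → (x : HahnSeries ℝ F).coeff r = 0

/-- Membership in `Λ₊^F ⊆ Λ₀^F`: all exponents are `> 0`. -/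
def MemLambdaPlus (x : Novikov F) : Prop :=
  ∀ r : ℝ, r ≤ 0 → (x : HahnSeries ℝ F).coeff r = 0


/-- The affine functions `ℓᵢ(u) = ⟨u, vᵢ⟩ - λᵢ` attached to a moment polytope. -/
def ell (n m : ℕ) (v : Fin m → Fin n → ℤ) (lam : Fin m → ℝ) (i : Fin m) (u : Fin n → ℝ) : ℝ :=
  (∑ j, u j * (v i j : ℝ)) - lam i

/-- The polytope `P = {u | ℓᵢ(u) ≥ 0 for all i}`. -/
def moment (n m : ℕ) (v : Fin m → Fin n → ℤ) (lam : Fin m → ℝ) : Set (Fin n → ℝ) :=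
  {u | ∀ i, 0 ≤ ell n m v lam i u}


/-- The facet `∂ᵢP = {u ∈ P | ℓᵢ(u) = 0}`. -/
def facet (n m : ℕ) (v : Fin m → Fin n → ℤ) (lam : Fin m → ℝ) (i : Fin m) :
    Set (Fin n → ℝ) :=
  {u ∈ moment n m v lam | ell n m v lam i u = 0}

/-- A subset `S ⊆ {1, …, m}` spans a cone of the normal fan iff `⋂_{i ∈ S} ∂ᵢP ≠ ∅`. -/
def SpansCone (n m : ℕ) (v : Fin m → Fin n → ℤ) (lam : Fin m → ℝ)
    (Sc : Finset (Fin m)) : Prop :=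
  (⋂ i ∈ Sc, facet n m v lam i).Nonempty

/-- A primitive collection: a subset which does not span a cone of the normal fan while
every proper subset does. -/
def IsPrimitiveCollection (n m : ℕ) (v : Fin m → Fin n → ℤ) (lam : Fin m → ℝ)
    (Pc : Finset (Fin m)) : Prop :=
  ¬ SpansCone n m v lam Pc ∧ ∀ Sc ⊂ Pc, SpansCone n m v lam Sc

/-- `P` is a (compact) Delzant polytope: every facet has dimension `n - 1`, and at every
vertex exactly `n` facets meet, whose normal vectors form a `ℤ`-basis of `ℤⁿ`. -/
def IsDelzant (n m : ℕ) (v : Fin m → Fin n → ℤ) (lam : Fin m → ℝ) : Prop :=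
  IsCompact (moment n m v lam) ∧ (interior (moment n m v lam)).Nonempty ∧
  (∀ i, Module.finrank ℝ (affineSpan ℝ (facet n m v lam i)).direction = n - 1) ∧
  ∀ u ∈ Set.extremePoints ℝ (moment n m v lam),
    ∃ σ : Fin n → Fin m, Function.Injective σ ∧
      {i | ell n m v lam i u = 0} = Set.range σ ∧
      IsUnit (Matrix.det (Matrix.of fun a b : Fin n => v (σ a) b))

/-- The universal Novikov field over `ℂ`, as a type. -/
def Lam : Type := ↥(Novikov ℂ)

instance : CommRing Lam := inferInstanceAs (CommRing ↥(Novikov ℂ))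

/-- The element `T^c` of `Λ^ℂ`. -/
def TPow (c : ℝ) : Lam := NovikovT ℂ c

/-- The generators `z(𝒫) = Π_{i∈𝒫} zᵢ - T^{ω(𝒫)} Π_{i'∈𝒫'} z_{i'}^{k_{i'}}` of the quantum
Stanley–Reisner ideal.  Here `ω(𝒫) = Σ_{i∈𝒫} ℓᵢ(u) - Σ_{i'∈𝒫'} k_{i'} ℓ_{i'}(u)`, which is
independent of `u` and equals `Σ_{i'∈𝒫'} k_{i'} λ_{i'} - Σ_{i∈𝒫} λᵢ`. -/
def SRgens (n m : ℕ) (v : Fin m → Fin n → ℤ) (lam : Fin m → ℝ) :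
    Set (MvPolynomial (Fin m) Lam) :=
  {q | ∃ (Pc Pc' : Finset (Fin m)) (k : Fin m → ℕ),
    IsPrimitiveCollection n m v lam Pc ∧ SpansCone n m v lam Pc' ∧
    (∀ i ∈ Pc', 0 < k i) ∧
    (∀ j, (∑ i ∈ Pc, v i j) = ∑ i ∈ Pc', (k i : ℤ) * v i j) ∧
    q = (∏ i ∈ Pc, MvPolynomial.X i) -
        MvPolynomial.C (TPow ((∑ i ∈ Pc', (k i : ℝ) * lam i) - ∑ i ∈ Pc, lam i)) *
          ∏ i ∈ Pc', MvPolynomial.X i ^ k i}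

/-- The quantum Stanley–Reisner ideal `SR_ω(X)`. -/
def SRideal (n m : ℕ) (v : Fin m → Fin n → ℤ) (lam : Fin m → ℝ) :
    Ideal (MvPolynomial (Fin m) Lam) :=
  Ideal.span (SRgens n m v lam)

/-- The linear relation ideal `P(X)`, generated by `Σᵢ v_{i,j} zᵢ` for `j = 1, …, n`. -/
def linearRelIdeal (n m : ℕ) (v : Fin m → Fin n → ℤ) :
    Ideal (MvPolynomial (Fin m) Lam) :=
  Ideal.span {q | ∃ j : Fin n, q = ∑ i, MvPolynomial.C ((v i j : ℤ) : Lam) * MvPolynomial.X i}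

/-- `(𝔶, u) ∈ Crit(𝔓𝔒₀)`: each coordinate `𝔶ⱼ` is a (unit) element of `Λ₀ ∖ Λ₊` and all
partial derivatives `∂𝔓𝔒₀^u/∂y_k = Σᵢ v_{i,k} T^{ℓᵢ(u)} y^{vᵢ - e_k}` of the leading order
potential function `𝔓𝔒₀^u = Σᵢ T^{ℓᵢ(u)} y^{vᵢ}` vanish at `𝔶`. -/
def IsCriticalPoint (n m : ℕ) (v : Fin m → Fin n → ℤ) (lam : Fin m → ℝ)
    (y : Fin n → Lamˣ) (u : Fin n → ℝ) : Prop :=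
  (∀ j, MemLambda0 (y j : Lam) ∧ ¬ MemLambdaPlus (y j : Lam)) ∧
  ∀ k : Fin n, (∑ i : Fin m, ((v i k : ℤ) : Lam) *
    (TPow (ell n m v lam i u) *
      ((∏ j, y j ^ ((v i j) - if j = k then 1 else 0) : Lamˣ) : Lam))) = 0

namespace SRaux

open Finset

lemma TPow_zero : TPow 0 = 1 := by
  apply Subtype.ext
  show (HahnSeries.single (0:ℝ) (1:ℂ)) = _
  rw [HahnSeries.single_zero_one]; rfl

lemma TPow_add (x y : ℝ) : TPow (x + y) = TPow x * TPow y := by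
  apply Subtype.ext
  show (HahnSeries.single (x+y) (1:ℂ)) = (HahnSeries.single x (1:ℂ)) * HahnSeries.single y 1
  rw [HahnSeries.single_mul_single, one_mul]

variable {n m : ℕ} {v : Fin m → Fin n → ℤ} {lam : Fin m → ℝ}

/-- key algebraic identity for weighted sums of the affine functions -/
lemma sum_ell (x : Fin m → ℝ) (u : Fin n → ℝ) :
    ∑ i, x i * ell n m v lam i u
      = (∑ j, u j * (∑ i, x i * (v i j : ℝ))) - ∑ i, x i * lam i := by
  unfold ell
  simp only [mul_sub, Finset.sum_sub_distrib]
  congr 1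
  calc ∑ i, x i * ∑ j, u j * (v i j : ℝ)
      = ∑ i, ∑ j, x i * (u j * (v i j : ℝ)) := by simp [Finset.mul_sum]
    _ = ∑ j, ∑ i, x i * (u j * (v i j : ℝ)) := Finset.sum_comm
    _ = ∑ j, u j * ∑ i, x i * (v i j : ℝ) := by
        refine Finset.sum_congr rfl fun j _ => ?_
        rw [Finset.mul_sum]
        exact Finset.sum_congr rfl fun i _ => by ring

lemma ell_add (i : Fin m) (u e : Fin n → ℝ) :
    ell n m v lam i (u + e) = ell n m v lam i u + ∑ j, e j * (v i j : ℝ) := by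
  unfold ell
  simp only [Pi.add_apply, add_mul, Finset.sum_add_distrib]
  ring

lemma convex_moment : Convex ℝ (moment n m v lam) := by
  intro x hx y hy θ τ hθ hτ hsum i
  have expand : ∑ j, (θ • x + τ • y) j * (v i j : ℝ)
      = θ * ∑ j, x j * (v i j : ℝ) + τ * ∑ j, y j * (v i j : ℝ) := by
    simp only [Pi.add_apply, Pi.smul_apply, smul_eq_mul, Finset.mul_sum, add_mul,
      Finset.sum_add_distrib]
    congr 1 <;> exact Finset.sum_congr rfl fun j _ => by ring
  have hlam : (θ + τ) * lam i = lam i := by rw [hsum, one_mul]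
  have hx' := hx i
  have hy' := hy i
  unfold ell at hx' hy' ⊢
  rw [expand]
  nlinarith [mul_le_mul_of_nonneg_left hx' hθ, mul_le_mul_of_nonneg_left hy' hτ]

lemma mem_moment {u : Fin n → ℝ} : u ∈ moment n m v lam ↔ ∀ i, 0 ≤ ell n m v lam i u := Iff.rfl

end SRaux
namespace SRaux2
open SRaux Finset

variable {n m : ℕ} {v : Fin m → Fin n → ℤ} {lam : Fin m → ℝ}

lemma exists_min_vertex (hC : IsCompact (moment n m v lam))
    (hne : (moment n m v lam).Nonempty) (w : Fin n → ℤ) :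
    ∃ u', u' ∈ Set.extremePoints ℝ (moment n m v lam) ∧ u' ∈ moment n m v lam ∧
      ∀ u ∈ moment n m v lam, (∑ j, u' j * (w j : ℝ)) ≤ ∑ j, u j * (w j : ℝ) := by
  classical
  set P := moment n m v lam with hP
  let lin : (Fin n → ℝ) →ₗ[ℝ] ℝ :=
    { toFun := fun u => ∑ j, u j * (w j : ℝ)
      map_add' := by intro a b; simp [add_mul, Finset.sum_add_distrib]
      map_smul' := by intro c a; simp [Finset.mul_sum, mul_assoc] }
  let l : (Fin n → ℝ) →L[ℝ] ℝ := LinearMap.toContinuousLinearMap (-lin)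
  obtain ⟨z, hzP, hz⟩ := hC.exists_isMaxOn hne l.continuous.continuousOn
  set Q : Set (Fin n → ℝ) := {x ∈ P | ∀ y ∈ P, l y ≤ l x} with hQ
  have hQne : Q.Nonempty := ⟨z, hzP, fun y hy => hz hy⟩
  have hexp : IsExposed ℝ P Q := fun _ => ⟨l, rfl⟩
  have hQcomp : IsCompact Q := hexp.isCompact hC
  obtain ⟨u', hu'⟩ := hQcomp.extremePoints_nonempty hQne
  have hu'Q : u' ∈ Q := hu'.1
  refine ⟨u', hexp.isExtreme.extremePoints_subset_extremePoints hu', hu'Q.1, ?_⟩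
  intro u hu
  have h1 : l u ≤ l u' := hu'Q.2 u hu
  have h2 : -(∑ j, u j * (w j : ℝ)) ≤ -(∑ j, u' j * (w j : ℝ)) := by
    simpa [l, lin] using h1
  linarith

end SRaux2
namespace SRaux3
open SRaux Finset Matrix

variable {n m : ℕ} {v : Fin m → Fin n → ℤ} {lam : Fin m → ℝ}

lemma vertex_rep (hm : 1 ≤ m) (u' : Fin n → ℝ) (hu'P : u' ∈ moment n m v lam)
    (σ : Fin n → Fin m)
    (hact : {i | ell n m v lam i u' = 0} = Set.range σ)
    (hdet : IsUnit (Matrix.det (Matrix.of fun a b : Fin n => v (σ a) b)))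
    (w : Fin n → ℤ)
    (hmin : ∀ u ∈ moment n m v lam, (∑ j, u' j * (w j : ℝ)) ≤ ∑ j, u j * (w j : ℝ)) :
    ∃ k : Fin n → ℤ, (∀ t, 0 ≤ k t) ∧ ∀ j, (∑ t, k t * v (σ t) j) = w j := by
  classical
  haveI : Nonempty (Fin m) := ⟨⟨0, hm⟩⟩
  set A : Matrix (Fin n) (Fin n) ℤ := Matrix.of (fun a b : Fin n => v (σ a) b) with hA
  haveI : Invertible Aᵀ := (Aᵀ).invertibleOfIsUnitDet (by rwa [Matrix.det_transpose])
  set k : Fin n → ℤ := (⅟(Aᵀ)).mulVec w with hk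
  have hAk : Aᵀ.mulVec k = w := by
    rw [hk, Matrix.mulVec_mulVec, mul_invOf_self, Matrix.one_mulVec]
  have hrep : ∀ j, (∑ t, k t * v (σ t) j) = w j := by
    intro j
    have := congrFun hAk j
    simpa [Matrix.mulVec, dotProduct, Matrix.transpose_apply, hA, mul_comm] using this
  refine ⟨k, ?_, hrep⟩
  by_contra hneg
  push_neg at hneg
  obtain ⟨t0, ht0⟩ := hneg
  -- real matrix and dual direction
  set Ar : Matrix (Fin n) (Fin n) ℝ := A.map (fun z : ℤ => (z : ℝ)) with hAr
  have hArdet : Ar.det ≠ 0 := by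
    have hmapm : Ar = (Int.castRingHom ℝ).mapMatrix A := by
      ext i j; simp [hAr]
    have : Ar.det = ((A.det : ℤ) : ℝ) := by
      rw [hmapm, ← RingHom.map_det]; rfl
    rw [this]
    rcases Int.isUnit_iff.1 hdet with h | h <;> rw [show A.det = _ from h] <;> norm_num
  set d : Fin n → ℝ := Ar⁻¹.mulVec (Pi.single t0 1) with hd
  have hArd : Ar.mulVec d = Pi.single t0 1 := by
    rw [hd, Matrix.mulVec_mulVec, Matrix.mul_nonsing_inv _ (isUnit_iff_ne_zero.2 hArdet),
      Matrix.one_mulVec]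
  set g : Fin m → ℝ := fun i => ∑ j, d j * (v i j : ℝ) with hg
  have hgσ : ∀ t, g (σ t) = if t = t0 then 1 else 0 := by
    intro t
    have := congrFun hArd t
    simp only [Matrix.mulVec, dotProduct, hAr, Matrix.map_apply, hA, Matrix.of_apply,
      Pi.single_apply] at this
    rw [hg]
    rw [← this]
    exact Finset.sum_congr rfl fun j _ => by ring
  set ε : ℝ := (Finset.univ.image (fun i : Fin m =>
      if 0 < ell n m v lam i u' then ell n m v lam i u' / (|g i| + 1) else 1)).min'
      (Finset.Nonempty.image Finset.univ_nonempty _) with hε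
  have hεpos : 0 < ε := by
    rw [hε, Finset.lt_min'_iff]
    intro b hb
    rw [Finset.mem_image] at hb
    obtain ⟨i, _, rfl⟩ := hb
    split
    · apply div_pos ‹_›; positivity
    · norm_num
  have hεle : ∀ i, 0 < ell n m v lam i u' → ε * (|g i| + 1) ≤ ell n m v lam i u' := by
    intro i hi
    have hmem : ell n m v lam i u' / (|g i| + 1) ∈ (Finset.univ.image (fun i : Fin m =>
        if 0 < ell n m v lam i u' then ell n m v lam i u' / (|g i| + 1) else 1)) := by
      rw [Finset.mem_image]
      exact ⟨i, Finset.mem_univ i, by rw [if_pos hi]⟩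
    have := Finset.min'_le _ _ hmem
    have hpos : (0:ℝ) < |g i| + 1 := by positivity
    calc ε * (|g i| + 1) ≤ (ell n m v lam i u' / (|g i| + 1)) * (|g i| + 1) := by
          apply mul_le_mul_of_nonneg_right _ (le_of_lt hpos)
          exact le_trans (le_of_eq hε) this
      _ = ell n m v lam i u' := div_mul_cancel₀ _ (ne_of_gt hpos)
  set u : Fin n → ℝ := u' + ε • d with hu
  have huP : u ∈ moment n m v lam := by
    intro i
    rw [hu, ell_add]
    have hsum : ∑ j, (ε • d) j * (v i j : ℝ) = ε * g i := by
      rw [hg, Finset.mul_sum]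
      exact Finset.sum_congr rfl fun j _ => by simp only [Pi.smul_apply, smul_eq_mul]; ring
    rw [hsum]
    rcases eq_or_lt_of_le (hu'P i) with h0 | hpos
    · -- active constraint: i is in the range of σ
      have : i ∈ Set.range σ := by rw [← hact]; exact h0.symm
      obtain ⟨t, rfl⟩ := this
      rw [← h0, hgσ t]
      split
      · linarith
      · simp
    · have h1 := hεle i hpos
      have h2 : -(ε * |g i|) ≤ ε * g i := by
        have := neg_abs_le (g i)
        nlinarith
      nlinarith [abs_nonneg (g i)]
  have hval : (∑ j, u j * (w j : ℝ)) = (∑ j, u' j * (w j : ℝ)) + ε * ∑ j, d j * (w j : ℝ) := by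
    rw [hu, Finset.mul_sum, ← Finset.sum_add_distrib]
    exact Finset.sum_congr rfl fun j _ => by simp [add_mul]; ring
  have hdw : (∑ j, d j * (w j : ℝ)) = (k t0 : ℝ) := by
    have hwj : ∀ j, (w j : ℝ) = ∑ t, (k t : ℝ) * (v (σ t) j : ℝ) := by
      intro j
      rw [← hrep j]
      push_cast
      rfl
    calc ∑ j, d j * (w j : ℝ) = ∑ j, ∑ t, (k t : ℝ) * (d j * (v (σ t) j : ℝ)) := by
          refine Finset.sum_congr rfl fun j _ => ?_
          rw [hwj j, Finset.mul_sum]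
          exact Finset.sum_congr rfl fun t _ => by ring
      _ = ∑ t, ∑ j, (k t : ℝ) * (d j * (v (σ t) j : ℝ)) := Finset.sum_comm
      _ = ∑ t, (k t : ℝ) * g (σ t) := by
          refine Finset.sum_congr rfl fun t _ => ?_
          rw [hg, Finset.mul_sum]
      _ = ∑ t, (if t = t0 then (k t : ℝ) else 0) := by
          refine Finset.sum_congr rfl fun t _ => ?_
          rw [hgσ t]
          split <;> simp
      _ = (k t0 : ℝ) := by rw [Finset.sum_ite_eq' Finset.univ t0 (fun t => ((k t : ℝ)))]; simp
  have hlt : (∑ j, u j * (w j : ℝ)) < ∑ j, u' j * (w j : ℝ) := by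
    rw [hval, hdw]
    have : ε * (k t0 : ℝ) < 0 := mul_neg_of_pos_of_neg hεpos (by exact_mod_cast ht0)
    linarith
  exact absurd (hmin u huP) (not_le.2 hlt)

end SRaux3
namespace SRaux4
open SRaux SRaux2 SRaux3 Finset Matrix

variable {n m : ℕ} {v : Fin m → Fin n → ℤ} {lam : Fin m → ℝ}

lemma sum_ell_finset (S : Finset (Fin m)) (x : Fin m → ℝ) (u : Fin n → ℝ) :
    ∑ i ∈ S, x i * ell n m v lam i u
      = (∑ j, u j * (∑ i ∈ S, x i * (v i j : ℝ))) - ∑ i ∈ S, x i * lam i := by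
  unfold ell
  simp only [mul_sub, Finset.sum_sub_distrib]
  congr 1
  calc ∑ i ∈ S, x i * ∑ j, u j * (v i j : ℝ)
      = ∑ i ∈ S, ∑ j, x i * (u j * (v i j : ℝ)) := by simp [Finset.mul_sum]
    _ = ∑ j, ∑ i ∈ S, x i * (u j * (v i j : ℝ)) := Finset.sum_comm
    _ = ∑ j, u j * ∑ i ∈ S, x i * (v i j : ℝ) := by
        refine Finset.sum_congr rfl fun j _ => ?_
        rw [Finset.mul_sum]
        exact Finset.sum_congr rfl fun i _ => by ring

lemma ell_pos_of_interior (hn : 1 ≤ n)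
    (hfacet : ∀ i, Module.finrank ℝ (affineSpan ℝ (facet n m v lam i)).direction = n - 1)
    {u₀ : Fin n → ℝ} (hu₀ : u₀ ∈ interior (moment n m v lam)) (i : Fin m) :
    0 < ell n m v lam i u₀ := by
  classical
  have hu₀P : u₀ ∈ moment n m v lam := interior_subset hu₀
  obtain ⟨ε, hεpos, hball⟩ := Metric.mem_nhds_iff.1 (mem_interior_iff_mem_nhds.1 hu₀)
  by_cases hvi : ∀ j, v i j = 0
  · -- constant constraint
    by_contra hle
    push_neg at hle
    have hell0 : ell n m v lam i u₀ = 0 := le_antisymm hle (hu₀P i)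
    have h1 : ∀ u : Fin n → ℝ, ell n m v lam i u = -lam i := by
      intro u
      unfold ell
      rw [Finset.sum_eq_zero (fun j _ => by rw [hvi j]; norm_num)]
      ring
    have hconst : ∀ u : Fin n → ℝ, ell n m v lam i u = 0 := fun u =>
      (h1 u).trans ((h1 u₀).symm.trans hell0)
    have hfeq : facet n m v lam i = moment n m v lam := by
      ext u; exact ⟨fun h => h.1, fun h => ⟨h, hconst u⟩⟩
    have hspan : affineSpan ℝ (moment n m v lam) = ⊤ := by
      rw [← Convex.interior_nonempty_iff_affineSpan_eq_top convex_moment]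
      exact ⟨u₀, hu₀⟩
    have := hfacet i
    rw [hfeq, hspan] at this
    rw [AffineSubspace.direction_top] at this
    rw [finrank_top, Module.finrank_pi] at this
    simp at this
    omega
  · push_neg at hvi
    obtain ⟨j, hj⟩ := hvi
    set sg : ℝ := if 0 < v i j then 1 else -1 with hsg
    set e : Fin n → ℝ := fun j' => if j' = j then -(ε/2) * sg else 0 with he
    have hu : u₀ + e ∈ moment n m v lam := by
      apply hball
      rw [Metric.mem_ball, dist_comm]
      rw [dist_pi_lt_iff hεpos]
      intro b
      rw [Real.dist_eq]
      have : u₀ b - (u₀ + e) b = -(e b) := by simp [Pi.add_apply]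
      rw [this, abs_neg, he]
      have hsg1 : |sg| = 1 := by rw [hsg]; split <;> norm_num
      simp only []
      split
      · rw [abs_mul, hsg1, mul_one, abs_neg, abs_div]
        rw [abs_of_pos hεpos]
        norm_num
        linarith
      · simpa using hεpos
    have hsum : ∑ j', e j' * (v i j' : ℝ) = -(ε/2) * (sg * (v i j : ℝ)) := by
      rw [he]
      calc ∑ j', (if j' = j then -(ε/2) * sg else 0) * (v i j' : ℝ)
          = ∑ j', (if j' = j then -(ε/2) * (sg * (v i j' : ℝ)) else 0) := by
            refine Finset.sum_congr rfl fun j' _ => ?_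
            split <;> ring
        _ = -(ε/2) * (sg * (v i j : ℝ)) := by
            rw [Finset.sum_ite_eq' Finset.univ j]
            simp
    have hsgv : (1 : ℝ) ≤ sg * (v i j : ℝ) := by
      rw [hsg]
      rcases lt_trichotomy (v i j) 0 with h | h | h
      · rw [if_neg (by omega)]
        have h' : v i j ≤ -1 := by omega
        have : (v i j : ℝ) ≤ -1 := by exact_mod_cast h'
        linarith
      · exact absurd h hj
      · rw [if_pos h]
        have : (1 : ℝ) ≤ (v i j : ℝ) := by exact_mod_cast h
        linarith
    have h0 := hu i
    rw [ell_add, hsum] at h0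
    nlinarith

lemma exists_primitive (hn : 1 ≤ n) (S : Finset (Fin m))
    (hS : ¬ SpansCone n m v lam S) :
    ∃ Pc, Pc ⊆ S ∧ IsPrimitiveCollection n m v lam Pc := by
  classical
  set T := S.powerset.filter (fun T => ¬ SpansCone n m v lam T) with hT
  have hTne : T.Nonempty := ⟨S, by simp [hT, Finset.mem_powerset, hS]⟩
  obtain ⟨Pc, hPcT, hmin⟩ := Finset.exists_min_image T Finset.card hTne
  rw [hT, Finset.mem_filter, Finset.mem_powerset] at hPcT
  refine ⟨Pc, hPcT.1, hPcT.2, fun Sc hSc => ?_⟩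
  by_contra hcon
  have hScT : Sc ∈ T := by
    rw [hT, Finset.mem_filter, Finset.mem_powerset]
    exact ⟨hSc.subset.trans hPcT.1, hcon⟩
  have := hmin Sc hScT
  have := Finset.card_lt_card hSc
  omega

end SRaux4
namespace SRaux5
open SRaux SRaux2 SRaux3 SRaux4 Finset Matrix

variable {n m : ℕ} {v : Fin m → Fin n → ℤ} {lam : Fin m → ℝ}

lemma keyStep (hm : 1 ≤ m) (hDelz : IsDelzant n m v lam) (Pc : Finset (Fin m)) :
    ∃ (Pc' : Finset (Fin m)) (k : Fin m → ℕ),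
      IsPrimitiveCollection n m v lam Pc →
      SpansCone n m v lam Pc' ∧ (∀ i ∈ Pc', 0 < k i) ∧
      (∀ j, (∑ i ∈ Pc, v i j) = ∑ i ∈ Pc', (k i : ℤ) * v i j) ∧
      0 < (∑ i ∈ Pc', (k i : ℝ) * lam i) - ∑ i ∈ Pc, lam i := by
  classical
  by_cases hprim : IsPrimitiveCollection n m v lam Pc
  swap
  · exact ⟨∅, fun _ => 0, fun h => absurd h hprim⟩
  set w : Fin n → ℤ := fun j => ∑ i ∈ Pc, v i j with hw
  have hPne : (moment n m v lam).Nonempty := ⟨_, interior_subset hDelz.2.1.some_mem⟩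
  obtain ⟨u', hu'ext, hu'P, hmin⟩ := exists_min_vertex hDelz.1 hPne w
  obtain ⟨σ, hσinj, hact, hdet⟩ := hDelz.2.2.2 u' hu'ext
  obtain ⟨k0, hk0nn, hk0⟩ := vertex_rep hm u' hu'P σ hact hdet w hmin
  set knat : Fin m → ℕ := fun i => ∑ t, if σ t = i then (k0 t).toNat else 0 with hknat
  set Pc' : Finset (Fin m) := Finset.univ.filter (fun i => knat i ≠ 0) with hPc'
  have hknotin : ∀ i, i ∉ Set.range σ → knat i = 0 := by
    intro i hi
    rw [hknat]
    refine Finset.sum_eq_zero fun t _ => ?_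
    rw [if_neg fun h => hi ⟨t, h⟩]
  have hell0 : ∀ i ∈ Pc', ell n m v lam i u' = 0 := by
    intro i hi
    rw [hPc', Finset.mem_filter] at hi
    have : i ∈ Set.range σ := by
      by_contra hcon
      exact hi.2 (hknotin i hcon)
    rw [← hact] at this
    exact this
  have hspan' : SpansCone n m v lam Pc' := by
    refine ⟨u', Set.mem_iInter₂.2 fun i hi => ?_⟩
    exact ⟨hu'P, hell0 i hi⟩
  have hrel : ∀ j, (∑ i ∈ Pc, v i j) = ∑ i ∈ Pc', (knat i : ℤ) * v i j := by
    intro j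
    have h1 : ∑ i ∈ Pc', (knat i : ℤ) * v i j = ∑ i, (knat i : ℤ) * v i j := by
      rw [hPc']
      rw [Finset.sum_filter]
      refine Finset.sum_congr rfl fun i _ => ?_
      split
      · rfl
      · rename_i hkn
        rw [not_not] at hkn
        rw [hkn]; simp
    rw [h1]
    have h2 : ∑ i, (knat i : ℤ) * v i j = ∑ i, ∑ t, (if σ t = i then ((k0 t).toNat : ℤ) else 0) * v i j := by
      refine Finset.sum_congr rfl fun i _ => ?_
      simp only [hknat]
      push_cast
      rw [Finset.sum_mul]
    rw [h2, Finset.sum_comm]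
    have h3 : ∀ t, ∑ i, (if σ t = i then ((k0 t).toNat : ℤ) else 0) * v i j
        = k0 t * v (σ t) j := by
      intro t
      rw [Finset.sum_eq_single (σ t)]
      · rw [if_pos rfl, Int.toNat_of_nonneg (hk0nn t)]
      · intro i _ hne
        rw [if_neg (fun h => hne h.symm), zero_mul]
      · intro h; exact absurd (Finset.mem_univ _) h
    rw [Finset.sum_congr rfl fun t _ => h3 t, hk0 j]
  refine ⟨Pc', knat, fun _ => ⟨hspan', ?_, hrel, ?_⟩⟩
  · intro i hi
    rw [hPc', Finset.mem_filter] at hi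
    omega
  · -- positivity of ω
    have hmain : (∑ i ∈ Pc', (knat i : ℝ) * lam i) - ∑ i ∈ Pc, lam i
        = ∑ i ∈ Pc, ell n m v lam i u' := by
      have e1 : ∑ i ∈ Pc, (1:ℝ) * ell n m v lam i u'
          = (∑ j, u' j * (∑ i ∈ Pc, (1:ℝ) * (v i j : ℝ))) - ∑ i ∈ Pc, (1:ℝ) * lam i :=
        sum_ell_finset Pc _ u'
      have e2 : ∑ i ∈ Pc', (knat i : ℝ) * ell n m v lam i u'
          = (∑ j, u' j * (∑ i ∈ Pc', (knat i : ℝ) * (v i j : ℝ))) - ∑ i ∈ Pc', (knat i : ℝ) * lam i :=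
        sum_ell_finset Pc' _ u'
      have e3 : ∑ i ∈ Pc', (knat i : ℝ) * ell n m v lam i u' = 0 :=
        Finset.sum_eq_zero fun i hi => by rw [hell0 i hi, mul_zero]
      have e4 : ∀ j, (∑ i ∈ Pc, (1:ℝ) * (v i j : ℝ)) = ∑ i ∈ Pc', (knat i : ℝ) * (v i j : ℝ) := by
        intro j
        have h := hrel j
        have hc : ((∑ i ∈ Pc, v i j : ℤ) : ℝ) = ((∑ i ∈ Pc', (knat i : ℤ) * v i j : ℤ) : ℝ) :=
          congrArg (fun z : ℤ => (z : ℝ)) h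
        push_cast at hc
        simpa using hc
      have e5 : ∑ i ∈ Pc, (1:ℝ) * ell n m v lam i u' = ∑ i ∈ Pc, ell n m v lam i u' :=
        Finset.sum_congr rfl fun i _ => one_mul _
      have e6 : ∑ i ∈ Pc, (1:ℝ) * lam i = ∑ i ∈ Pc, lam i :=
        Finset.sum_congr rfl fun i _ => one_mul _
      have e7 : (∑ j, u' j * (∑ i ∈ Pc, (1:ℝ) * (v i j : ℝ)))
          = ∑ j, u' j * (∑ i ∈ Pc', (knat i : ℝ) * (v i j : ℝ)) :=
        Finset.sum_congr rfl fun j _ => by rw [e4 j]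
      -- from e2, e3: ∑_j u' j * (...) = ∑ knat * lam
      rw [e5, e6] at e1
      rw [e1, e7]
      linarith [e2, e3]
    rw [hmain]
    have hnn : ∀ i ∈ Pc, 0 ≤ ell n m v lam i u' := fun i _ => hu'P i
    rcases (Finset.sum_nonneg hnn).lt_or_eq with h | h
    · exact h
    · exfalso
      apply hprim.1
      refine ⟨u', Set.mem_iInter₂.2 fun i hi => ?_⟩
      refine ⟨hu'P, ?_⟩
      have := (Finset.sum_eq_zero_iff_of_nonneg hnn).1 h.symm i hi
      exact this

end SRaux5
namespace SRaux6
open SRaux SRaux2 SRaux3 SRaux4 Finset Matrix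

variable {n m : ℕ} {v : Fin m → Fin n → ℤ} {lam : Fin m → ℝ}

/-- A full-support weighted sum identity specialised to ℕ coefficients. -/
lemma sum_ell_nat (a : Fin m → ℕ) (u : Fin n → ℝ) :
    ∑ i, (a i : ℝ) * ell n m v lam i u
      = (∑ j, u j * ((∑ i, (a i : ℤ) * v i j : ℤ) : ℝ)) - ∑ i, (a i : ℝ) * lam i := by
  rw [sum_ell_finset Finset.univ (fun i => (a i : ℝ)) u]
  congr 1
  refine Finset.sum_congr rfl fun j _ => ?_
  congr 1
  push_cast
  rfl

lemma uniq (hDelz : IsDelzant n m v lam) (a b : Fin m → ℕ)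
    (ha : SpansCone n m v lam (Finset.univ.filter fun i => a i ≠ 0))
    (hb : SpansCone n m v lam (Finset.univ.filter fun i => b i ≠ 0))
    (hab : ∀ j, (∑ i, (a i : ℤ) * v i j) = ∑ i, (b i : ℤ) * v i j) : a = b := by
  classical
  set w : Fin n → ℤ := fun j => ∑ i, (a i : ℤ) * v i j with hw
  have hPne : (moment n m v lam).Nonempty := ⟨_, interior_subset hDelz.2.1.some_mem⟩
  obtain ⟨u', hu'ext, hu'P, hmin⟩ := exists_min_vertex hDelz.1 hPne w
  obtain ⟨σ, hσinj, hact, hdet⟩ := hDelz.2.2.2 u' hu'ext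
  have hval : ∀ (c : Fin m → ℕ), (∀ j, (∑ i, (c i : ℤ) * v i j) = w j) →
      ∀ u, (∑ j, u j * (w j : ℝ))
        = ∑ i, (c i : ℝ) * ell n m v lam i u + ∑ i, (c i : ℝ) * lam i := by
    intro c hc u
    have h0 := sum_ell_nat (v := v) (lam := lam) c u
    have h2 : ∀ j, ((∑ i, (c i : ℤ) * v i j : ℤ) : ℝ) = (w j : ℝ) := fun j =>
      congrArg (fun z : ℤ => (z : ℝ)) (hc j)
    have h3 : (∑ j, u j * ((∑ i, (c i : ℤ) * v i j : ℤ) : ℝ)) = ∑ j, u j * (w j : ℝ) :=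
      Finset.sum_congr rfl fun j _ => by rw [h2 j]
    linarith
  have hkey : ∀ (c : Fin m → ℕ), (∀ j, (∑ i, (c i : ℤ) * v i j) = w j) →
      SpansCone n m v lam (Finset.univ.filter fun i => c i ≠ 0) →
      ∀ i, c i ≠ 0 → ell n m v lam i u' = 0 := by
    intro c hc hcspan i hci
    obtain ⟨uc, huc⟩ := hcspan
    have hifilter : i ∈ Finset.univ.filter (fun i => c i ≠ 0) := by simp [hci]
    have hucP : uc ∈ moment n m v lam := (Set.mem_iInter₂.1 huc i hifilter).1
    have hellc : ∀ i', c i' ≠ 0 → ell n m v lam i' uc = 0 := fun i' h =>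
      (Set.mem_iInter₂.1 huc i' (by simp [h])).2
    have h1 : (∑ j, uc j * (w j : ℝ)) = ∑ i, (c i : ℝ) * lam i := by
      rw [hval c hc uc]
      have : ∑ i, (c i : ℝ) * ell n m v lam i uc = 0 := by
        refine Finset.sum_eq_zero fun i' _ => ?_
        by_cases h : c i' = 0
        · rw [h]; simp
        · rw [hellc i' h, mul_zero]
      rw [this, zero_add]
    have h2 := hval c hc u'
    have h3 : (0:ℝ) ≤ ∑ i, (c i : ℝ) * ell n m v lam i u' :=
      Finset.sum_nonneg fun i' _ => mul_nonneg (by positivity) (hu'P i')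
    have h4 := hmin uc hucP
    have h5 : ∑ i, (c i : ℝ) * ell n m v lam i u' = 0 := by linarith
    have h6 := (Finset.sum_eq_zero_iff_of_nonneg
      (fun i' (_ : i' ∈ Finset.univ) => mul_nonneg (by positivity : (0:ℝ) ≤ (c i' : ℝ)) (hu'P i'))).1 h5 i (Finset.mem_univ i)
    rcases mul_eq_zero.1 h6 with h | h
    · exfalso; exact hci (by exact_mod_cast h)
    · exact h
  have hasupp := hkey a (fun j => rfl) ha
  have hbsupp := hkey b (fun j => (hab j).symm) hb
  have hrange : ∀ i, (a i ≠ 0 ∨ b i ≠ 0) → i ∈ Finset.univ.image σ := by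
    intro i hi
    have hzero : ell n m v lam i u' = 0 := by
      rcases hi with h | h
      · exact hasupp i h
      · exact hbsupp i h
    have : i ∈ Set.range σ := by rw [← hact]; exact hzero
    obtain ⟨t, ht⟩ := this
    exact Finset.mem_image.2 ⟨t, Finset.mem_univ t, ht⟩
  set A : Matrix (Fin n) (Fin n) ℤ := Matrix.of (fun a b : Fin n => v (σ a) b) with hA
  haveI : Invertible Aᵀ := (Aᵀ).invertibleOfIsUnitDet (by rwa [Matrix.det_transpose])
  set z : Fin n → ℤ := fun t => (a (σ t) : ℤ) - (b (σ t) : ℤ) with hz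
  have hAz : Aᵀ.mulVec z = 0 := by
    funext j
    show (∑ t, Aᵀ j t * z t) = 0
    have hfull : ∑ i, ((a i : ℤ) - (b i : ℤ)) * v i j = 0 := by
      simp only [sub_mul, Finset.sum_sub_distrib]
      rw [hab j]; ring
    have hsub : ∑ i ∈ Finset.univ.image σ, ((a i : ℤ) - (b i : ℤ)) * v i j
        = ∑ i, ((a i : ℤ) - (b i : ℤ)) * v i j := by
      refine Finset.sum_subset (Finset.subset_univ _) fun i _ hi => ?_
      have ha0 : a i = 0 := by
        by_contra h; exact hi (hrange i (Or.inl h))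
      have hb0 : b i = 0 := by
        by_contra h; exact hi (hrange i (Or.inr h))
      rw [ha0, hb0]; simp
    have himg : ∑ i ∈ Finset.univ.image σ, ((a i : ℤ) - (b i : ℤ)) * v i j
        = ∑ t, ((a (σ t) : ℤ) - (b (σ t) : ℤ)) * v (σ t) j :=
      Finset.sum_image fun t _ t' _ h => hσinj h
    calc (∑ t, Aᵀ j t * z t)
        = ∑ t, ((a (σ t) : ℤ) - (b (σ t) : ℤ)) * v (σ t) j := by
          refine Finset.sum_congr rfl fun t _ => ?_
          rw [hz, hA]
          show (Matrix.of (fun a b : Fin n => v (σ a) b))ᵀ j t * _ = _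
          rw [Matrix.transpose_apply, Matrix.of_apply]
          ring
      _ = 0 := by rw [← himg, hsub, hfull]
  have hz0 : z = 0 := by
    have := congrArg (fun y => (⅟(Aᵀ)).mulVec y) hAz
    simpa [Matrix.mulVec_mulVec, invOf_mul_self, Matrix.one_mulVec, Matrix.mulVec_zero] using this
  funext i
  by_cases hi : a i ≠ 0 ∨ b i ≠ 0
  · obtain ⟨t, _, ht⟩ := Finset.mem_image.1 (hrange i hi)
    have := congrFun hz0 t
    rw [hz] at this
    simp only [Pi.zero_apply, sub_eq_zero] at this
    rw [← ht]
    exact_mod_cast this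
  · push_neg at hi
    rw [hi.1, hi.2]

end SRaux6
namespace SRaux7
open SRaux SRaux2 SRaux3 SRaux4 SRaux5 SRaux6 Finset

variable {n m : ℕ} {v : Fin m → Fin n → ℤ} {lam : Fin m → ℝ}

lemma Mmul (c d : Fin m → ℕ) :
    (∏ i, MvPolynomial.X (R := Lam) i ^ (c i + d i))
      = (∏ i, MvPolynomial.X i ^ c i) * ∏ i, MvPolynomial.X i ^ d i := by
  rw [← Finset.prod_mul_distrib]
  exact Finset.prod_congr rfl fun i _ => pow_add _ _ _

lemma Mite (S : Finset (Fin m)) (k : Fin m → ℕ) :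
    (∏ i, MvPolynomial.X (R := Lam) i ^ (if i ∈ S then k i else 0))
      = ∏ i ∈ S, MvPolynomial.X i ^ k i := by
  calc (∏ i, MvPolynomial.X (R := Lam) i ^ (if i ∈ S then k i else 0))
      = ∏ i, (if i ∈ S then MvPolynomial.X (R := Lam) i ^ k i else 1) :=
        Finset.prod_congr rfl fun i _ => by split <;> simp
    _ = ∏ i ∈ Finset.univ ∩ S, MvPolynomial.X i ^ k i :=
        Finset.prod_ite_mem Finset.univ S _
    _ = ∏ i ∈ S, MvPolynomial.X i ^ k i := by rw [Finset.univ_inter]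

lemma reduce (hn : 1 ≤ n) (hDelz : IsDelzant n m v lam)
    {u₀ : Fin n → ℝ} (hu₀ : u₀ ∈ interior (moment n m v lam))
    {ωmin : ℝ} (hωpos : 0 < ωmin)
    (hωle : ∀ Pc : Finset (Fin m), IsPrimitiveCollection n m v lam Pc →
      ∃ (Pc' : Finset (Fin m)) (k : Fin m → ℕ),
        SpansCone n m v lam Pc' ∧ (∀ i ∈ Pc', 0 < k i) ∧
        (∀ j, (∑ i ∈ Pc, v i j) = ∑ i ∈ Pc', (k i : ℤ) * v i j) ∧
        ωmin ≤ (∑ i ∈ Pc', (k i : ℝ) * lam i) - ∑ i ∈ Pc, lam i) :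
    ∀ (N : ℕ) (a : Fin m → ℕ),
      (∑ i, (a i : ℝ) * ell n m v lam i u₀) ≤ N * ωmin →
      ∃ a' : Fin m → ℕ,
        SpansCone n m v lam (Finset.univ.filter fun i => a' i ≠ 0) ∧
        (∀ j, (∑ i, (a' i : ℤ) * v i j) = ∑ i, (a i : ℤ) * v i j) ∧
        ((∏ i, MvPolynomial.X i ^ a i) -
          MvPolynomial.C (TPow ((∑ i, (a' i : ℝ) * lam i) - ∑ i, (a i : ℝ) * lam i)) *
            ∏ i, MvPolynomial.X i ^ a' i) ∈ SRideal n m v lam := by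
  classical
  have hδpos : ∀ i, 0 < ell n m v lam i u₀ :=
    ell_pos_of_interior hn hDelz.2.2.1 hu₀
  intro N
  induction N with
  | zero =>
    intro a ha
    have ha0 : ∀ i, a i = 0 := by
      intro i0
      by_contra hi0
      have h1 : ∀ i ∈ Finset.univ, (0:ℝ) ≤ (a i : ℝ) * ell n m v lam i u₀ :=
        fun i _ => mul_nonneg (by positivity) (le_of_lt (hδpos i))
      have h2 := Finset.single_le_sum h1 (Finset.mem_univ i0)
      have h3 : (0:ℝ) < (a i0 : ℝ) * ell n m v lam i0 u₀ := by
        apply mul_pos _ (hδpos i0)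
        have h4 : 1 ≤ a i0 := by omega
        exact_mod_cast Nat.lt_of_lt_of_le Nat.zero_lt_one h4
      simp only [Nat.cast_zero, zero_mul] at ha
      linarith
    refine ⟨a, ?_, fun j => rfl, ?_⟩
    · have : (Finset.univ.filter fun i => a i ≠ 0) = ∅ := by
        apply Finset.filter_eq_empty_iff.2
        intro i _
        simp [ha0 i]
      rw [this]
      exact ⟨u₀, Set.mem_iInter₂.2 fun i hi => absurd hi (by simp)⟩
    · rw [sub_self, TPow_zero, map_one, one_mul, sub_self]
      exact Ideal.zero_mem _
  | succ N ih =>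
    intro a ha
    by_cases hs : SpansCone n m v lam (Finset.univ.filter fun i => a i ≠ 0)
    · refine ⟨a, hs, fun j => rfl, ?_⟩
      rw [sub_self, TPow_zero, map_one, one_mul, sub_self]
      exact Ideal.zero_mem _
    obtain ⟨Pc, hPcsub, hPcprim⟩ := exists_primitive hn _ hs
    obtain ⟨Pc', k, hspan', hkpos, hrel, hωge⟩ := hωle Pc hPcprim
    set ω : ℝ := (∑ i ∈ Pc', (k i : ℝ) * lam i) - ∑ i ∈ Pc, lam i with hω
    have hone : ∀ i ∈ Pc, 1 ≤ a i := by
      intro i hi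
      have := hPcsub hi
      rw [Finset.mem_filter] at this
      omega
    set a1 : Fin m → ℕ := fun i => a i - (if i ∈ Pc then 1 else 0) with ha1
    set amid : Fin m → ℕ := fun i => a1 i + (if i ∈ Pc' then k i else 0) with hamid
    have hle1 : ∀ i, (if i ∈ Pc then 1 else 0) ≤ a i := by
      intro i
      by_cases h : i ∈ Pc
      · simpa [h] using hone i h
      · simp [h]
    have hcast1 : ∀ i, ((a1 i : ℕ) : ℝ) = (a i : ℝ) - (if i ∈ Pc then (1:ℝ) else 0) := by
      intro i
      rw [ha1]
      simp only []
      rw [Nat.cast_sub (hle1 i)]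
      by_cases h : i ∈ Pc <;> simp [h]
    have hshift : ∀ f : Fin m → ℝ, (∑ i, (amid i : ℝ) * f i)
        = (∑ i, (a i : ℝ) * f i) - (∑ i ∈ Pc, f i) + ∑ i ∈ Pc', (k i : ℝ) * f i := by
      intro f
      have h1 : ∀ i, (amid i : ℝ) * f i
          = (a i : ℝ) * f i - (if i ∈ Pc then f i else 0)
            + (if i ∈ Pc' then (k i : ℝ) * f i else 0) := by
        intro i
        by_cases h1 : i ∈ Pc <;> by_cases h2 : i ∈ Pc' <;>
          (rw [hamid]; push_cast; rw [hcast1 i]; simp [h1, h2]; try ring)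
      rw [Finset.sum_congr rfl fun i _ => h1 i]
      rw [Finset.sum_add_distrib, Finset.sum_sub_distrib]
      rw [Finset.sum_ite_mem, Finset.sum_ite_mem, Finset.univ_inter, Finset.univ_inter]
    -- the amount of energy dropped equals ω at every point, in particular at u₀
    have hωeq : ∀ u : Fin n → ℝ,
        (∑ i ∈ Pc, ell n m v lam i u) - (∑ i ∈ Pc', (k i : ℝ) * ell n m v lam i u) = ω := by
      intro u
      have e1 := sum_ell_finset (v := v) (lam := lam) Pc (fun _ => (1:ℝ)) u
      have e2 := sum_ell_finset (v := v) (lam := lam) Pc' (fun i => (k i : ℝ)) u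
      simp only [one_mul] at e1
      have e4 : ∀ j, (∑ i ∈ Pc, (v i j : ℝ)) = ∑ i ∈ Pc', (k i : ℝ) * (v i j : ℝ) := by
        intro j
        have hc : ((∑ i ∈ Pc, v i j : ℤ) : ℝ) = ((∑ i ∈ Pc', (k i : ℤ) * v i j : ℤ) : ℝ) :=
          congrArg (fun z : ℤ => (z : ℝ)) (hrel j)
        push_cast at hc
        simpa using hc
      have e5 : (∑ j, u j * (∑ i ∈ Pc, (v i j : ℝ)))
          = ∑ j, u j * (∑ i ∈ Pc', (k i : ℝ) * (v i j : ℝ)) :=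
        Finset.sum_congr rfl fun j _ => by rw [e4 j]
      rw [hω]
      linarith
    -- energy decrease
    have hEmid : (∑ i, (amid i : ℝ) * ell n m v lam i u₀) ≤ N * ωmin := by
      have := hshift (fun i => ell n m v lam i u₀)
      have h2 := hωeq u₀
      have hNsucc : ((N+1 : ℕ) : ℝ) * ωmin = N * ωmin + ωmin := by push_cast; ring
      rw [hNsucc] at ha
      linarith
    obtain ⟨a', hspan'', hrel'', hmem''⟩ := ih amid hEmid
    -- exponent sums relation for amid
    have hrelmid : ∀ j, (∑ i, (amid i : ℤ) * v i j) = ∑ i, (a i : ℤ) * v i j := by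
      intro j
      have h1 : ∀ i, (amid i : ℤ) * v i j
          = (a i : ℤ) * v i j - (if i ∈ Pc then v i j else 0)
            + (if i ∈ Pc' then (k i : ℤ) * v i j else 0) := by
        intro i
        have hle : (if i ∈ Pc then 1 else 0) ≤ a i := hle1 i
        rw [hamid, ha1]
        simp only []
        push_cast [Nat.cast_sub hle]
        split <;> split <;> push_cast <;> ring
      rw [Finset.sum_congr rfl fun i _ => h1 i]
      rw [Finset.sum_add_distrib, Finset.sum_sub_distrib]
      rw [Finset.sum_ite_mem, Finset.sum_ite_mem, Finset.univ_inter, Finset.univ_inter]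
      rw [← hrel j]
      ring
    -- step membership
    have hgen : ((∏ i ∈ Pc, MvPolynomial.X i) -
        MvPolynomial.C (TPow ω) * ∏ i ∈ Pc', MvPolynomial.X i ^ k i) ∈ SRgens n m v lam :=
      ⟨Pc, Pc', k, hPcprim, hspan', hkpos, hrel, rfl⟩
    have hMa : (∏ i, MvPolynomial.X (R := Lam) i ^ a i)
        = (∏ i, MvPolynomial.X i ^ a1 i) * ∏ i ∈ Pc, MvPolynomial.X i := by
      have hsplit : ∀ i, a i = a1 i + (if i ∈ Pc then 1 else 0) := by
        intro i
        rw [ha1]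
        simp only []
        have := hle1 i
        omega
      rw [Finset.prod_congr rfl fun i _ => by rw [hsplit i], Mmul]
      congr 1
      rw [Mite Pc (fun _ => 1)]
      exact Finset.prod_congr rfl fun i _ => pow_one _
    have hMmid : (∏ i, MvPolynomial.X (R := Lam) i ^ amid i)
        = (∏ i, MvPolynomial.X i ^ a1 i) * ∏ i ∈ Pc', MvPolynomial.X i ^ k i := by
      calc (∏ i, MvPolynomial.X (R := Lam) i ^ amid i)
          = ∏ i, MvPolynomial.X (R := Lam) i ^ (a1 i + if i ∈ Pc' then k i else 0) := rfl
        _ = (∏ i, MvPolynomial.X i ^ a1 i) * ∏ i ∈ Pc', MvPolynomial.X i ^ k i := by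
            rw [Mmul, Mite]
    have hstep : ((∏ i, MvPolynomial.X i ^ a i) -
        MvPolynomial.C (TPow ω) * ∏ i, MvPolynomial.X i ^ amid i) ∈ SRideal n m v lam := by
      have : ((∏ i, MvPolynomial.X i ^ a i) -
          MvPolynomial.C (TPow ω) * ∏ i, MvPolynomial.X i ^ amid i)
          = (∏ i, MvPolynomial.X i ^ a1 i) *
            ((∏ i ∈ Pc, MvPolynomial.X i) -
              MvPolynomial.C (TPow ω) * ∏ i ∈ Pc', MvPolynomial.X i ^ k i) := by
        rw [hMa, hMmid]
        ring
      rw [this]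
      exact Ideal.mul_mem_left _ _ (Ideal.subset_span hgen)
    -- combine
    have hΛ : (∑ i, (amid i : ℝ) * lam i) = (∑ i, (a i : ℝ) * lam i) + ω := by
      have := hshift lam
      rw [hω]
      linarith
    have hTT : MvPolynomial.C (R := Lam) (σ := Fin m) (TPow ω) *
        MvPolynomial.C (TPow ((∑ i, (a' i : ℝ) * lam i) - ∑ i, (amid i : ℝ) * lam i))
        = MvPolynomial.C (TPow ((∑ i, (a' i : ℝ) * lam i) - ∑ i, (a i : ℝ) * lam i)) := by
      rw [← map_mul, ← TPow_add]
      congr 2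
      rw [hΛ]
      ring
    refine ⟨a', hspan'', fun j => by rw [hrel'' j, hrelmid j], ?_⟩
    have hcomb : ((∏ i, MvPolynomial.X i ^ a i) -
        MvPolynomial.C (TPow ((∑ i, (a' i : ℝ) * lam i) - ∑ i, (a i : ℝ) * lam i)) *
          ∏ i, MvPolynomial.X i ^ a' i)
        = ((∏ i, MvPolynomial.X i ^ a i) -
            MvPolynomial.C (TPow ω) * ∏ i, MvPolynomial.X i ^ amid i)
          + MvPolynomial.C (TPow ω) *
            ((∏ i, MvPolynomial.X i ^ amid i) -
              MvPolynomial.C (TPow ((∑ i, (a' i : ℝ) * lam i) - ∑ i, (amid i : ℝ) * lam i)) *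
                ∏ i, MvPolynomial.X i ^ a' i) := by
      rw [← hTT]
      ring
    rw [hcomb]
    exact add_mem hstep (Ideal.mul_mem_left _ _ hmem'')

end SRaux7
/-- **Statement 11** (Lemma 6.7 of Fukaya–Oh–Ohta–Ono, *Lagrangian Floer theory on compact
toric manifolds I*).  Let `c ∈ ℤ^m` with `Σᵢ cᵢ vᵢ = 0` and write `cᵢ = aᵢ - bᵢ` with
`aᵢ, bᵢ ≥ 0`, `aᵢ bᵢ = 0`.  Then `ρ = Σᵢ aᵢ ℓᵢ(u) - Σᵢ bᵢ ℓᵢ(u)` is independent of `u`,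
and the element `r = Πᵢ zᵢ^{aᵢ} - T^ρ Πᵢ zᵢ^{bᵢ}` belongs to the quantum Stanley–Reisner
ideal `SR_ω(X)`. -/
theorem relation_mem_SRideal
    (n m : ℕ) (hn : 1 ≤ n) (hm : 1 ≤ m)
    (v : Fin m → Fin n → ℤ) (lam : Fin m → ℝ)
    (hDelz : IsDelzant n m v lam)
    (c : Fin m → ℤ) (hc : ∀ j, (∑ i, c i * v i j) = 0)
    (a b : Fin m → ℕ)
    (hab : ∀ i, c i = (a i : ℤ) - (b i : ℤ)) (hab0 : ∀ i, a i * b i = 0) :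
    ∃ ρ : ℝ,
      (∀ u : Fin n → ℝ,
        ((∑ i, (a i : ℝ) * ell n m v lam i u) - ∑ i, (b i : ℝ) * ell n m v lam i u) = ρ) ∧
      ((∏ i, MvPolynomial.X i ^ a i) -
          MvPolynomial.C (TPow ρ) * ∏ i, MvPolynomial.X i ^ b i) ∈ SRideal n m v lam := by
  classical
  have hvab : ∀ j, (∑ i, (a i : ℤ) * v i j) = ∑ i, (b i : ℤ) * v i j := by
    intro j
    have h0 : ∑ i, ((a i : ℤ) - (b i : ℤ)) * v i j = 0 := by
      rw [← hc j]
      exact Finset.sum_congr rfl fun i _ => by rw [hab i]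
    simp only [sub_mul, Finset.sum_sub_distrib] at h0
    linarith
  refine ⟨(∑ i, (b i : ℝ) * lam i) - ∑ i, (a i : ℝ) * lam i, ?_, ?_⟩
  · intro u
    have hA := SRaux6.sum_ell_nat (v := v) (lam := lam) a u
    have hB := SRaux6.sum_ell_nat (v := v) (lam := lam) b u
    have h4 : (∑ j, u j * ((∑ i, (a i : ℤ) * v i j : ℤ) : ℝ))
        = ∑ j, u j * ((∑ i, (b i : ℤ) * v i j : ℤ) : ℝ) :=
      Finset.sum_congr rfl fun j _ => by rw [hvab j]
    linarith
  · obtain ⟨u₀, hu₀⟩ := hDelz.2.1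
    have hks := fun Pc => SRaux5.keyStep hm hDelz Pc
    choose F1 F2 hF using hks
    set Prims : Finset (Finset (Fin m)) :=
      Finset.univ.filter (fun Pc => IsPrimitiveCollection n m v lam Pc) with hPrims
    set ωf : Finset (Fin m) → ℝ :=
      fun Pc => (∑ i ∈ F1 Pc, (F2 Pc i : ℝ) * lam i) - ∑ i ∈ Pc, lam i with hωf
    set ωmin : ℝ := if h : Prims.Nonempty then (Prims.image ωf).min' (h.image ωf) else 1
      with hωmin
    have hωminpos : 0 < ωmin := by
      rw [hωmin]
      split_ifs with h
      · have hmem := Finset.min'_mem (Prims.image ωf) (h.image ωf)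
        rw [Finset.mem_image] at hmem
        obtain ⟨Pc, hPcP, hPc⟩ := hmem
        rw [← hPc]
        have hprim : IsPrimitiveCollection n m v lam Pc := by
          rw [hPrims, Finset.mem_filter] at hPcP
          exact hPcP.2
        have h4 := (hF Pc hprim).2.2.2
        simpa [hωf] using h4
      · norm_num
    have hωminle : ∀ Pc : Finset (Fin m), IsPrimitiveCollection n m v lam Pc →
        ∃ (Pc' : Finset (Fin m)) (k : Fin m → ℕ),
          SpansCone n m v lam Pc' ∧ (∀ i ∈ Pc', 0 < k i) ∧
          (∀ j, (∑ i ∈ Pc, v i j) = ∑ i ∈ Pc', (k i : ℤ) * v i j) ∧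
          ωmin ≤ (∑ i ∈ Pc', (k i : ℝ) * lam i) - ∑ i ∈ Pc, lam i := by
      intro Pc hprim
      have hPcmem : Pc ∈ Prims := by
        rw [hPrims, Finset.mem_filter]
        exact ⟨Finset.mem_univ _, hprim⟩
      refine ⟨F1 Pc, F2 Pc, (hF Pc hprim).1, (hF Pc hprim).2.1, (hF Pc hprim).2.2.1, ?_⟩
      have hle : ωmin ≤ ωf Pc := by
        rw [hωmin, dif_pos ⟨Pc, hPcmem⟩]
        exact Finset.min'_le _ _ (Finset.mem_image_of_mem ωf hPcmem)
      simpa [hωf] using hle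
    obtain ⟨N, hN⟩ := exists_nat_ge
      (max (∑ i, (a i : ℝ) * ell n m v lam i u₀) (∑ i, (b i : ℝ) * ell n m v lam i u₀) / ωmin)
    have hNmax : max (∑ i, (a i : ℝ) * ell n m v lam i u₀)
        (∑ i, (b i : ℝ) * ell n m v lam i u₀) ≤ N * ωmin :=
      (div_le_iff₀ hωminpos).1 hN
    have hNa : (∑ i, (a i : ℝ) * ell n m v lam i u₀) ≤ N * ωmin :=
      le_trans (le_max_left _ _) hNmax
    have hNb : (∑ i, (b i : ℝ) * ell n m v lam i u₀) ≤ N * ωmin :=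
      le_trans (le_max_right _ _) hNmax
    obtain ⟨a', hsa, hra, hma⟩ := SRaux7.reduce hn hDelz hu₀ hωminpos hωminle N a hNa
    obtain ⟨b', hsb, hrb, hmb⟩ := SRaux7.reduce hn hDelz hu₀ hωminpos hωminle N b hNb
    have hab' : a' = b' :=
      SRaux6.uniq hDelz a' b' hsa hsb (fun j => by rw [hra j, hvab j, ← hrb j])
    rw [← hab'] at hmb
    have hTT : MvPolynomial.C (R := Lam) (σ := Fin m)
          (TPow ((∑ i, (b i : ℝ) * lam i) - ∑ i, (a i : ℝ) * lam i)) *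
        MvPolynomial.C (TPow ((∑ i, (a' i : ℝ) * lam i) - ∑ i, (b i : ℝ) * lam i))
        = MvPolynomial.C (TPow ((∑ i, (a' i : ℝ) * lam i) - ∑ i, (a i : ℝ) * lam i)) := by
      rw [← map_mul, ← SRaux.TPow_add]
      congr 2
      ring
    have hcomb : ((∏ i, MvPolynomial.X i ^ a i) -
        MvPolynomial.C (TPow ((∑ i, (b i : ℝ) * lam i) - ∑ i, (a i : ℝ) * lam i)) *
          ∏ i, MvPolynomial.X i ^ b i)
        = ((∏ i, MvPolynomial.X i ^ a i) -
            MvPolynomial.C (TPow ((∑ i, (a' i : ℝ) * lam i) - ∑ i, (a i : ℝ) * lam i)) *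
              ∏ i, MvPolynomial.X i ^ a' i)
          - MvPolynomial.C (TPow ((∑ i, (b i : ℝ) * lam i) - ∑ i, (a i : ℝ) * lam i)) *
            ((∏ i, MvPolynomial.X i ^ b i) -
              MvPolynomial.C (TPow ((∑ i, (a' i : ℝ) * lam i) - ∑ i, (b i : ℝ) * lam i)) *
                ∏ i, MvPolynomial.X i ^ a' i) := by
      rw [← hTT]
      ring
    rw [hcomb]
    exact sub_mem hma (Ideal.mul_mem_left _ _ hmb)
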